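/- Consider the two-component screening problem with Θ^A = {0, 1}, X = {0, 1}, u^A(x, θ^A) = θ^A x, v^A(x, θ^A) = 2.5(1/2 − θ^A)x, costly component Θ^B = {−1, 0}, Y = {0, 1}, u^B(y, θ^B) = θ^B y, v^B = 0 (with y₀ = 0), and types uniformly distributed on the comonotone pairs {(0, −1), (1, 0)}. Then every IC and IR mechanism that involves no costly screening (y ≡ 0 and (x, t) depending only on θ^A) yields principal payoff at most 0, whereas the direct mechanism assigning (x, y, t) = (1, 0, 0) to type (0, −1) and (x, y, t) = (0, 1, −1) to type (1, 0) is IC and IR and yields principal payoff 1/8 > 0. -/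
import Mathlib


noncomputable section

/-- IC and IR for a direct mechanism in the two-component, two-type example.
Type L is `(θ^A, θ^B) = (0, −1)`, type H is `(1, 0)`; the agent's utility from a
triple `(x, y, t)` at type `(θ^A, θ^B)` is `θ^A x + θ^B y − t`. -/
def ICIR19 (xL yL tL xH yH tH : ℝ) : Prop :=
  xL ∈ ({0, 1} : Set ℝ) ∧ xH ∈ ({0, 1} : Set ℝ) ∧
    yL ∈ ({0, 1} : Set ℝ) ∧ yH ∈ ({0, 1} : Set ℝ) ∧
    -- IC for type L = (0, −1) and for type H = (1, 0):
    (0 * xL + (-1) * yL - tL ≥ 0 * xH + (-1) * yH - tH) ∧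
    (1 * xH + 0 * yH - tH ≥ 1 * xL + 0 * yL - tL) ∧
    -- IR:
    (0 * xL + (-1) * yL - tL ≥ 0) ∧ (1 * xH + 0 * yH - tH ≥ 0)

/-- The principal's expected payoff: `E[2.5 (1/2 − θ^A) x + t]` over the two equally
likely types. -/
def Payoff19 (xL tL xH tH : ℝ) : ℝ :=
  (1 / 2) * (2.5 * (1 / 2 - 0) * xL + tL) + (1 / 2) * (2.5 * (1 / 2 - 1) * xH + tH)

/-- **Costly screening can strictly help without a sorting condition on surplus.**
Every IC and IR mechanism with no costly screening (`y ≡ 0`) yields principal payoff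
at most `0`, while the mechanism assigning `(1, 0, 0)` to type `(0, −1)` and
`(0, 1, −1)` to type `(1, 0)` is IC, IR, and yields payoff `1/8 > 0`. -/
theorem stmt19 :
    (∀ xL tL xH tH : ℝ, ICIR19 xL 0 tL xH 0 tH → Payoff19 xL tL xH tH ≤ 0) ∧
    ICIR19 1 0 0 0 1 (-1) ∧ Payoff19 1 0 0 (-1) = 1 / 8 ∧ (0 : ℝ) < 1 / 8 := by
  refine ⟨?_, ?_, ?_, ?_⟩
  · rintro xL tL xH tH ⟨hxL, hxH, -, -, h1, h2, h3, h4⟩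
    simp only [Set.mem_insert_iff, Set.mem_singleton_iff] at hxL hxH
    unfold Payoff19
    rcases hxL with h|h <;> rcases hxH with h'|h' <;> subst h <;> subst h' <;>
      norm_num at * <;> linarith
  · unfold ICIR19; norm_num
  · unfold Payoff19; norm_num
  · norm_num
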